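/- Let L_4 = U^{⊕3} ⊕ E8(-1)^{⊕2} ⊕ ⟨-6⟩ and let D ∈ L_4 be a primitive vector with D² < 0 such that the dual class r = D/div(D) ∈ L_4 ⊗ ℚ satisfies r² ≥ -7/2. Then the pair (D², div(D)) belongs to the set {(-14, 2), (-24, 3), (-78, 6), (-2, 1), (-6, 3), (-6, 6), (-6, 2)}. -/

import Mathlib

open Matrix

/-- Gram matrix of the hyperbolic plane `U`. -/
def U2 : Matrix (Fin 2) (Fin 2) ℤ := !![0, 1; 1, 0]

/-- Gram matrix of the negative definite `E8(-1)` lattice. -/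
def E8neg : Matrix (Fin 8) (Fin 8) ℤ :=
  !![-2, 1, 0, 0, 0, 0, 0, 0;
      1,-2, 1, 0, 0, 0, 0, 0;
      0, 1,-2, 1, 0, 0, 0, 0;
      0, 0, 1,-2, 1, 0, 0, 0;
      0, 0, 0, 1,-2, 1, 0, 1;
      0, 0, 0, 0, 1,-2, 1, 0;
      0, 0, 0, 0, 0, 1,-2, 0;
      0, 0, 0, 0, 1, 0, 0,-2]

/-- Index type of the unimodular summand `U^3 ⊕ E8(-1)^2`. -/
abbrev KIdx := (Fin 2 ⊕ (Fin 2 ⊕ Fin 2)) ⊕ (Fin 8 ⊕ Fin 8)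

/-- Gram matrix of `U^3 ⊕ E8(-1)^2`. -/
def GramK : Matrix KIdx KIdx ℤ :=
  Matrix.fromBlocks
    (Matrix.fromBlocks U2 0 0 (Matrix.fromBlocks U2 0 0 U2)) 0 0
    (Matrix.fromBlocks E8neg 0 0 E8neg)

/-- Index type of `L_n = U^3 ⊕ E8(-1)^2 ⊕ ⟨-(2n-2)⟩`. -/
abbrev LIdx := KIdx ⊕ Fin 1

/-- Gram matrix of `L_n = U^3 ⊕ E8(-1)^2 ⊕ ⟨-(2n-2)⟩`. -/
def GramL (n : ℕ) : Matrix LIdx LIdx ℤ :=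
  Matrix.fromBlocks GramK 0 0 !![-(2 * (n : ℤ) - 2)]

/-- The bilinear form of `L_n`. -/
def bil (n : ℕ) (v w : LIdx → ℤ) : ℤ := v ⬝ᵥ ((GramL n).mulVec w)

/-- The `ℚ`-bilinear extension of the form of `L_n` to `L_n ⊗ ℚ`. -/
def bilQ (n : ℕ) (v w : LIdx → ℚ) : ℚ :=
  v ⬝ᵥ (((GramL n).map (Int.cast : ℤ → ℚ)).mulVec w)

/-- The inclusion `L_n ↪ L_n ⊗ ℚ`. -/
def toQ (v : LIdx → ℤ) : LIdx → ℚ := fun i => (v i : ℚ)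

/-- The generator `δ` of the summand `⟨-(2n-2)⟩`. -/
def deltaVec : LIdx → ℤ := fun i => if i = Sum.inr 0 then 1 else 0

/-- A lattice vector is primitive if it is not a nontrivial multiple of
another lattice vector. -/
def IsPrimitive (v : LIdx → ℤ) : Prop :=
  ∀ (k : ℤ) (w : LIdx → ℤ), v = k • w → IsUnit k

/-- `HasDiv n v m` says that `div(v) = m`, i.e. `(v, L_n) = mℤ`. -/
def HasDiv (n : ℕ) (v : LIdx → ℤ) (m : ℤ) : Prop :=
  Ideal.span (Set.range fun w => bil n v w) = Ideal.span {m}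

/-! ### Auxiliary lemmas -/


lemma aux_sq_mod_eight (a : ℤ) (h : a % 2 = 1) : a * a % 8 = 1 := by
  have h8 : a % 8 = 1 ∨ a % 8 = 3 ∨ a % 8 = 5 ∨ a % 8 = 7 := by omega
  have := Int.mul_emod a a 8
  rcases h8 with h8 | h8 | h8 | h8 <;> rw [h8] at this <;> omega

lemma aux_sq_mod_three (a : ℤ) (h : ¬ (3:ℤ) ∣ a) : a * a % 3 = 1 := by
  have h3 : a % 3 = 1 ∨ a % 3 = 2 := by omega
  have := Int.mul_emod a a 3
  rcases h3 with h3 | h3 <;> rw [h3] at this <;> omega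

open Finset in
lemma aux_even_quad {ι : Type*} [Fintype ι] [DecidableEq ι] (G : Matrix ι ι ℤ)
    (hsym : ∀ i j, G i j = G j i) (hdiag : ∀ i, G i i % 2 = 0) (v : ι → ℤ) :
    (v ⬝ᵥ G.mulVec v) % 2 = 0 := by
  have h : ((v ⬝ᵥ G.mulVec v : ℤ) : ZMod 2) = 0 := by
    have he : (v ⬝ᵥ G.mulVec v : ℤ) = ∑ p ∈ univ ×ˢ univ, v p.1 * G p.1 p.2 * v p.2 := by
      rw [Finset.sum_product]
      simp [dotProduct, Matrix.mulVec, Finset.mul_sum, mul_assoc]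
    rw [he]
    push_cast
    refine Finset.sum_ninvolution Prod.swap (fun a => ?_) (fun a ha => ?_) (by simp) (by simp)
    · have h2 : ((G a.2 a.1 : ℤ) : ZMod 2) = ((G a.1 a.2 : ℤ) : ZMod 2) := by rw [hsym]
      simp only [Prod.swap]
      rw [h2]
      have h0 : ∀ x : ZMod 2, x + x = 0 := by decide
      rw [show ((v a.2 : ZMod 2)) * (G a.1 a.2 : ZMod 2) * (v a.1 : ZMod 2)
          = (v a.1 : ZMod 2) * (G a.1 a.2 : ZMod 2) * (v a.2 : ZMod 2) by ring]
      exact h0 _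
    · rcases a with ⟨i, j⟩
      intro hswap
      have hji : j = i := congrArg Prod.fst hswap
      subst hji
      apply ha
      have h0 : ((G j j : ℤ) : ZMod 2) = 0 := by
        rw [ZMod.intCast_zmod_eq_zero_iff_dvd]
        exact Int.dvd_of_emod_eq_zero (hdiag j)
      simp [h0]
  rw [ZMod.intCast_zmod_eq_zero_iff_dvd] at h
  omega

def E8inv : Matrix (Fin 8) (Fin 8) ℤ :=
  !![-2, -3, -4, -5, -6, -4, -2, -3;
     -3, -6, -8, -10, -12, -8, -4, -6;
     -4, -8, -12, -15, -18, -12, -6, -9;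
     -5, -10, -15, -20, -24, -16, -8, -12;
     -6, -12, -18, -24, -30, -20, -10, -15;
     -4, -8, -12, -16, -20, -14, -7, -10;
     -2, -4, -6, -8, -10, -7, -4, -5;
     -3, -6, -9, -12, -15, -10, -5, -8]

def InvK : Matrix KIdx KIdx ℤ :=
  Matrix.fromBlocks
    (Matrix.fromBlocks U2 0 0 (Matrix.fromBlocks U2 0 0 U2)) 0 0
    (Matrix.fromBlocks E8inv 0 0 E8inv)

lemma aux_U2_mul_U2 : U2 * U2 = 1 := by decide
lemma aux_E8_mul_inv : E8neg * E8inv = 1 := by decide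

lemma aux_gramK_mul_invK : GramK * InvK = 1 := by
  rw [GramK, InvK]
  rw [Matrix.fromBlocks_multiply, Matrix.fromBlocks_multiply, Matrix.fromBlocks_multiply,
    Matrix.fromBlocks_multiply]
  simp [aux_U2_mul_U2, aux_E8_mul_inv, Matrix.fromBlocks_one]

lemma aux_gramK_symm : ∀ i j : KIdx, GramK i j = GramK j i := @of_decide_eq_true _ (@Fintype.decidableForallFintype _ _ (fun i => @Fintype.decidableForallFintype _ _ (fun j => inferInstance) _) _) (by rfl)
lemma aux_gramK_even : ∀ i : KIdx, GramK i i % 2 = 0 := by decide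

lemma aux_bil_eq (v w : LIdx → ℤ) :
    bil 4 v w = (v ∘ Sum.inl) ⬝ᵥ GramK.mulVec (w ∘ Sum.inl)
      + (-6) * (v (Sum.inr 0) * w (Sum.inr 0)) := by
  have hv : v = Sum.elim (v ∘ Sum.inl) (v ∘ Sum.inr) := by
    ext i; cases i <;> rfl
  rw [bil, GramL, Matrix.fromBlocks_mulVec]
  nth_rewrite 1 [hv]
  rw [sumElim_dotProduct_sumElim]
  simp [Matrix.mulVec, dotProduct, Fin.sum_univ_one, Fin.sum_univ_two]
  ring

/-- in `L_4`, a primitive vector `D` with `D² < 0` whose dual class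
`r = D/div(D)` satisfies `r² ≥ -7/2` has `(D², div(D))` in the given list. -/
theorem stmt_8 (D : LIdx → ℤ) (hprim : IsPrimitive D) (m : ℤ) (hm : 0 < m)
    (hdiv : HasDiv 4 D m) (hneg : bil 4 D D < 0)
    (hr : (-7 / 2 : ℚ) ≤ (bil 4 D D : ℚ) / (m : ℚ) ^ 2) :
    (bil 4 D D = -14 ∧ m = 2) ∨ (bil 4 D D = -24 ∧ m = 3) ∨
    (bil 4 D D = -78 ∧ m = 6) ∨ (bil 4 D D = -2 ∧ m = 1) ∨
    (bil 4 D D = -6 ∧ m = 3) ∨ (bil 4 D D = -6 ∧ m = 6) ∨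
    (bil 4 D D = -6 ∧ m = 2) := by
  set x : KIdx → ℤ := D ∘ Sum.inl with hxdef
  set a : ℤ := D (Sum.inr 0) with hadef
  -- every value of the form is divisible by m
  have hdvd : ∀ w, m ∣ bil 4 D w := by
    intro w
    have hmem : bil 4 D w ∈ Ideal.span (Set.range fun w => bil 4 D w) :=
      Ideal.subset_span ⟨w, rfl⟩
    rw [hdiv, Ideal.mem_span_singleton] at hmem
    exact hmem
  -- m divides (x ᵥ* GramK) j for all j
  have hKdvd : ∀ j : KIdx, m ∣ Matrix.vecMul x GramK j := by
    intro j
    have := hdvd (Sum.elim (Pi.single j 1) 0)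
    rw [aux_bil_eq] at this
    have hc1 : (Sum.elim (Pi.single j (1:ℤ)) (0 : Fin 1 → ℤ)) ∘ Sum.inl = Pi.single j 1 := rfl
    have hc2 : (Sum.elim (Pi.single j (1:ℤ)) (0 : Fin 1 → ℤ)) (Sum.inr 0) = 0 := rfl
    rw [hc1, hc2, Matrix.dotProduct_mulVec, dotProduct_single] at this
    simpa using this
  -- hence m divides every coordinate of x
  have hxdvd : ∀ i : KIdx, m ∣ x i := by
    intro i
    have hx1 : Matrix.vecMul (Matrix.vecMul x GramK) InvK = x := by
      rw [Matrix.vecMul_vecMul, aux_gramK_mul_invK, Matrix.vecMul_one]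
    have hexp : x i = ∑ j : KIdx, Matrix.vecMul x GramK j * InvK j i := by
      conv_lhs => rw [← hx1]
      rfl
    rw [hexp]
    exact Finset.dvd_sum fun j _ => Dvd.dvd.mul_right (hKdvd j) _
  -- m divides 6a
  have h6a : m ∣ a * 6 := by
    have := hdvd deltaVec
    rw [aux_bil_eq] at this
    have hc1 : deltaVec ∘ Sum.inl = (0 : KIdx → ℤ) := by
      funext i; simp [deltaVec]
    have hc2 : deltaVec (Sum.inr 0) = 1 := by simp [deltaVec]
    rw [hc1, hc2, Matrix.mulVec_zero, dotProduct_zero] at this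
    have : m ∣ -(6 * (a * 1)) := (dvd_neg).mpr (by simpa using this)
    rw [dvd_neg] at this
    rw [show a * 6 = 6 * (a * 1) by ring]; exact this
  -- primitivity: common divisors of all coordinates are units
  have hU : ∀ k : ℤ, (∀ i, k ∣ D i) → IsUnit k := by
    intro k hk
    exact hprim k (fun i => D i / k) (funext fun i => by
      simp only [Pi.smul_apply, smul_eq_mul]
      exact (Int.mul_ediv_cancel' (hk i)).symm)
  -- gcd(m, a) = 1
  have hgcd : Int.gcd m a = 1 := by
    have hu : IsUnit ((Int.gcd m a : ℤ)) := by
      apply hU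
      intro i
      cases i with
      | inl j => exact dvd_trans (Int.gcd_dvd_left m a) (hxdvd j)
      | inr j =>
        have : j = 0 := Subsingleton.elim _ _
        rw [this]
        exact Int.gcd_dvd_right m a
    rw [Int.isUnit_iff] at hu
    omega
  -- m divides 6
  have hm6 : m ∣ 6 := Int.dvd_of_dvd_mul_right_of_gcd_one h6a hgcd
  -- write x = m • x'
  set x' : KIdx → ℤ := fun i => x i / m with hx'def
  have hxm : x = m • x' := by
    funext i
    simp only [Pi.smul_apply, smul_eq_mul, hx'def]
    exact (Int.mul_ediv_cancel' (hxdvd i)).symm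
  set q : ℤ := x' ⬝ᵥ GramK.mulVec x' with hqdef
  have hq : q % 2 = 0 := aux_even_quad GramK aux_gramK_symm aux_gramK_even x'
  have hN : bil 4 D D = m ^ 2 * q - 6 * (a * a) := by
    rw [aux_bil_eq, ← hxdef, ← hadef, hxm]
    rw [Matrix.mulVec_smul, smul_dotProduct, dotProduct_smul]
    simp only [smul_eq_mul, ← hqdef]
    ring
  -- the inequality over ℤ
  have hmQ : (0:ℚ) < (m:ℚ) ^ 2 := by positivity
  have hineq : -7 * m ^ 2 ≤ bil 4 D D * 2 := by
    rw [div_le_div_iff₀ (by norm_num) hmQ] at hr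
    exact_mod_cast hr
  -- case on m
  have hm6' : m ≤ 6 := Int.le_of_dvd (by norm_num) hm6
  set N : ℤ := bil 4 D D with hNdef
  interval_cases m
  · -- m = 1
    omega
  · -- m = 2
    have ha2 : a % 2 = 1 := by
      rcases Int.emod_two_eq_zero_or_one a with h | h
      · exfalso
        have : (2:ℤ) ∣ (Int.gcd 2 a : ℤ) := Int.dvd_coe_gcd (by norm_num) (Int.dvd_of_emod_eq_zero h)
        rw [hgcd] at this
        norm_num at this
      · exact h
    have := aux_sq_mod_eight a ha2
    omega
  · -- m = 3
    have ha3 : ¬ (3:ℤ) ∣ a := by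
      intro h
      have : (3:ℤ) ∣ (Int.gcd 3 a : ℤ) := Int.dvd_coe_gcd (by norm_num) h
      rw [hgcd] at this
      norm_num at this
    have := aux_sq_mod_three a ha3
    omega
  · -- m = 4 impossible
    norm_num at hm6
  · -- m = 5 impossible
    norm_num at hm6
  · -- m = 6
    have ha2 : a % 2 = 1 := by
      rcases Int.emod_two_eq_zero_or_one a with h | h
      · exfalso
        have : (2:ℤ) ∣ (Int.gcd 6 a : ℤ) := Int.dvd_coe_gcd (by norm_num) (Int.dvd_of_emod_eq_zero h)
        rw [hgcd] at this
        norm_num at this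
      · exact h
    have ha3 : ¬ (3:ℤ) ∣ a := by
      intro h
      have : (3:ℤ) ∣ (Int.gcd 6 a : ℤ) := Int.dvd_coe_gcd (by norm_num) h
      rw [hgcd] at this
      norm_num at this
    have h1 := aux_sq_mod_eight a ha2
    have h2 := aux_sq_mod_three a ha3
    omega
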